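/- Let I = {0,1,…,n+mr−1} ∖ {n, n+m, …, n+(r−1)m} and fix i with 1 ≤ i ≤ r−1. Define σ_i(j) = j+m if n+(i−1)m < j < n+im, σ_i(j) = j−m if n+im < j < n+(i+1)m, and σ_i(j) = j otherwise. Let T_{τ_i} = K_0K_1⋯K_{m−2}K_{m−1}K_{m−2}⋯K_1K_0, where b = n+im and K_l = T_{b−l}T_{b−l+2}⋯T_{b+l}. Then in H(Γ_{n+mr}), for every j ∈ I one has T_{τ_i}·T_j = T_{σ_i(j)}·T_{τ_i} (in particular T_{τ_i} commutes with T_0). Consequently T_{τ_i} normalizes the parabolic subalgebra H(Γ_{n,(m^r)}) generated by {T_j : j ∈ I}. -/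

import Mathlib

namespace St11

variable {A : Type*} [Ring A]

/-- product of `T`-letters over a list of indices -/
def wp (T : ℕ → A) (L : List ℕ) : A := (L.map T).prod

@[simp] lemma wp_nil (T : ℕ → A) : wp T [] = 1 := rfl
@[simp] lemma wp_cons (T : ℕ → A) (c : ℕ) (L : List ℕ) :
    wp T (c :: L) = T c * wp T L := by simp [wp]
@[simp] lemma wp_append (T : ℕ → A) (L₁ L₂ : List ℕ) :
    wp T (L₁ ++ L₂) = wp T L₁ * wp T L₂ := by simp [wp]

lemma comm_wp {T : ℕ → A} {x : A} {L : List ℕ}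
    (h : ∀ c ∈ L, x * T c = T c * x) : x * wp T L = wp T L * x := by
  induction L with
  | nil => simp
  | cons c L ih =>
    simp only [wp_cons]
    rw [← mul_assoc, h c (by simp), mul_assoc,
      ih (fun d hd => h d (by simp [hd])), ← mul_assoc]

lemma wp_rev {T : ℕ → A} {L : List ℕ}
    (h : ∀ x ∈ L, ∀ y ∈ L, T x * T y = T y * T x) :
    wp T L.reverse = wp T L := by
  induction L with
  | nil => simp
  | cons c L ih =>
    simp only [List.reverse_cons, wp_append, wp_cons, wp_nil, mul_one]
    rw [ih (fun x hx y hy => h x (by simp [hx]) y (by simp [hy]))]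
    exact (comm_wp (fun d hd => h c (by simp) d (by simp [hd]))).symm

lemma wp_comp (T : ℕ → A) (f : ℕ → ℕ) (L : List ℕ) :
    wp (fun c => T (f c)) L = wp T (L.map f) := by
  simp [wp, List.map_map]; rfl

/-- decreasing run `[p+s-1, …, p+1, p]` -/
def Drun (p : ℕ) : ℕ → List ℕ
  | 0 => []
  | s+1 => (p+s) :: Drun p s

lemma mem_Drun {p s x : ℕ} (h : x ∈ Drun p s) : p ≤ x ∧ x < p + s := by
  induction s with
  | zero => simp [Drun] at h
  | succ s ih =>
    simp only [Drun, List.mem_cons] at h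
    rcases h with rfl | h
    · omega
    · have := ih h; omega

lemma Drun_append (p k s : ℕ) : Drun (p+k) s ++ Drun p k = Drun p (s+k) := by
  induction s with
  | zero =>
    show [] ++ Drun p k = Drun p (0 + k)
    rw [Nat.zero_add, List.nil_append]
  | succ s ih =>
    show (p + k + s) :: (Drun (p+k) s ++ Drun p k) = Drun p (s+1+k)
    have h1 : s + 1 + k = (s + k) + 1 := by omega
    rw [h1, ih]
    show _ = (p + (s+k)) :: Drun p (s+k)
    congr 1
    omega

/-- `[p, p+2, …, p+2l]` -/
def Kl (p : ℕ) : ℕ → List ℕ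
  | 0 => [p]
  | l+1 => p :: Kl (p+2) l

lemma mem_Kl : ∀ {l p x : ℕ}, x ∈ Kl p l → ∃ t, t ≤ l ∧ x = p + 2*t := by
  intro l
  induction l with
  | zero => intro p x h; simp [Kl] at h; exact ⟨0, by omega, by omega⟩
  | succ l ih =>
    intro p x h
    simp only [Kl, List.mem_cons] at h
    rcases h with rfl | h
    · exact ⟨0, by omega, by omega⟩
    · obtain ⟨t, ht, rfl⟩ := ih h
      exact ⟨t+1, by omega, by omega⟩

lemma mem_Kl' {l p x : ℕ} (h : x ∈ Kl p l) : p ≤ x ∧ x ≤ p + 2*l := by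
  obtain ⟨t, ht, rfl⟩ := mem_Kl h; omega

lemma Kl_snoc : ∀ (l p : ℕ), Kl p (l+1) = Kl p l ++ [p + 2*(l+1)] := by
  intro l
  induction l with
  | zero =>
    intro p
    show [p, p+2] = [p] ++ [p + 2*1]
    simp
  | succ l ih =>
    intro p
    show p :: Kl (p+2) (l+1) = (p :: Kl (p+2) l) ++ [p + 2*(l+2)]
    rw [ih (p+2)]
    have h : p+2+2*(l+1) = p + 2*(l+2) := by omega
    rw [h, List.cons_append]

lemma Kl_eq_range (l p : ℕ) : Kl p l = (List.range (l+1)).map (fun t => p + 2*t) := by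
  induction l generalizing p with
  | zero => simp [Kl, List.range_succ]
  | succ l ih =>
    show p :: Kl (p+2) l = _
    conv_rhs => rw [List.range_succ_eq_map, List.map_cons, List.map_map]
    congr 1
    rw [ih (p+2)]
    apply List.map_congr_left
    intro t _
    simp only [Function.comp_apply, Nat.succ_eq_add_one]
    omega

/-- `K₀ K₁ ⋯ K_l` centered at `c` -/
def Pl (c : ℕ) : ℕ → List ℕ
  | 0 => [c]
  | l+1 => Pl c l ++ Kl (c - (l+1)) (l+1)

/-- `K_l K_{l-1} ⋯ K₀` centered at `c` -/
def Ql (c : ℕ) : ℕ → List ℕ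
  | 0 => [c]
  | l+1 => Kl (c - (l+1)) (l+1) ++ Ql c l

lemma mem_Pl : ∀ {l c x : ℕ}, l ≤ c → x ∈ Pl c l → c - l ≤ x ∧ x ≤ c + l := by
  intro l
  induction l with
  | zero => intro c x _ h; simp [Pl] at h; omega
  | succ l ih =>
    intro c x hl h
    simp only [Pl, List.mem_append] at h
    rcases h with h | h
    · have := ih (by omega) h; omega
    · have := mem_Kl' h; omega

lemma mem_Ql : ∀ {l c x : ℕ}, l ≤ c → x ∈ Ql c l → c - l ≤ x ∧ x ≤ c + l := by
  intro l
  induction l with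
  | zero => intro c x _ h; simp [Ql] at h; omega
  | succ l ih =>
    intro c x hl h
    simp only [Ql, List.mem_append] at h
    rcases h with h | h
    · have := mem_Kl' h; omega
    · have := ih (by omega) h; omega

/-- prefix concatenations of A/B/W rows -/
def AJp (a m : ℕ) : ℕ → List ℕ
  | 0 => []
  | k+1 => AJp a m k ++ Drun (a + 2*k) (m - k)

def BJp (a : ℕ) : ℕ → List ℕ
  | 0 => []
  | k+1 => BJp a k ++ Drun (a + k) k

def WJp (a m : ℕ) : ℕ → List ℕ
  | 0 => []
  | k+1 => WJp a m k ++ Drun (a + k) m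

lemma mem_BJp : ∀ {k a x : ℕ}, x ∈ BJp a k → a + 1 ≤ x ∧ x + 3 ≤ a + 2*k := by
  intro k
  induction k with
  | zero => intro a x h; simp [BJp] at h
  | succ k ih =>
    intro a x h
    simp only [BJp, List.mem_append] at h
    rcases h with h | h
    · have := ih h; omega
    · have := mem_Drun h; omega

lemma mem_WJp : ∀ {k a m x : ℕ}, x ∈ WJp a m k → a ≤ x ∧ x + 1 ≤ a + m - 1 + k := by
  intro k
  induction k with
  | zero => intro a m x h; simp [WJp] at h
  | succ k ih =>
    intro a m x h
    simp only [WJp, List.mem_append] at h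
    rcases h with h | h
    · have := ih h; omega
    · have := mem_Drun h; omega

/-- left-peel version of the A rows -/
def AJl (a m : ℕ) : ℕ → List ℕ
  | 0 => []
  | k+1 => Drun (a + 2*(m-(k+1))) (k+1) ++ AJl a m k

lemma AJconv (a m : ℕ) : ∀ k, k ≤ m → AJp a m m = AJp a m (m-k) ++ AJl a m k := by
  intro k
  induction k with
  | zero => intro _; simp [AJl]
  | succ k ih =>
    intro hk
    have h1 := ih (by omega)
    have h2 : m - k = (m - (k+1)) + 1 := by omega
    rw [h1, h2]
    show (AJp a m (m-(k+1)) ++ Drun (a + 2*(m-(k+1))) (m - (m-(k+1)))) ++ AJl a m k = _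
    have h3 : m - (m - (k+1)) = k + 1 := by omega
    rw [h3, List.append_assoc]
    rfl


lemma move_mid {x y z w : A} (h : y * z = z * y) :
    (x * y) * (z * w) = (x * z) * (y * w) := by
  rw [mul_assoc, ← mul_assoc y z w, h, mul_assoc z y w, ← mul_assoc]

section Alg

variable (T : ℕ → A) (lo hi : ℕ)

lemma Prec (comm : ∀ x y, lo ≤ x → x + 2 ≤ y → y ≤ hi → T x * T y = T y * T x) :
    ∀ l c, lo + l + 1 ≤ c → c + l + 1 ≤ hi →
      wp T (Pl c (l+1)) = wp T (Drun (c-(l+1)) (l+2)) * wp T (Pl (c+1) l) := by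
  intro l
  induction l with
  | zero =>
    intro c h1 h2
    show wp T ([c] ++ [c-1, c-1+2]) = wp T [c-1+1, c-1+0] * wp T [c+1]
    rw [show c-1+2 = c+1 from by omega, show c-1+1 = c from by omega,
      show c-1+0 = c-1 from by omega]
    simp [mul_assoc]
  | succ l ih =>
    intro c h1 h2
    have e1 : Pl c (l+2) = Pl c (l+1) ++ Kl (c-(l+2)) (l+2) := rfl
    have e2 : Kl (c-(l+2)) (l+2) = (c-(l+2)) :: Kl (c - l) (l+1) := by
      show (c-(l+2)) :: Kl ((c-(l+2))+2) (l+1) = _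
      rw [show c-(l+2)+2 = c-l from by omega]
    have hP : wp T (Pl c (l+1)) = wp T (Drun (c-(l+1)) (l+2)) * wp T (Pl (c+1) l) :=
      ih c (by omega) (by omega)
    have hmove : wp T (Pl (c+1) l) * T (c-(l+2)) = T (c-(l+2)) * wp T (Pl (c+1) l) := by
      refine (comm_wp ?_).symm
      intro d hd
      have hb := mem_Pl (l := l) (c := c+1) (by omega) hd
      exact comm (c-(l+2)) d (by omega) (by omega) (by omega)
    have hd : wp T (Drun (c-(l+1)) (l+2)) * T (c-(l+2)) = wp T (Drun (c-(l+2)) (l+3)) := by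
      have h := Drun_append (c-(l+2)) 1 (l+2)
      rw [show c-(l+2)+1 = c-(l+1) from by omega] at h
      rw [← h, wp_append]
      congr 1
      show T (c-(l+2)) = wp T [c-(l+2)+0]
      rw [show c-(l+2)+0 = c-(l+2) from by omega]
      simp
    have hPl : Pl (c+1) l ++ Kl (c-l) (l+1) = Pl (c+1) (l+1) := by
      show _ = Pl (c+1) l ++ Kl ((c+1)-(l+1)) (l+1)
      rw [show (c+1)-(l+1) = c-l from by omega]
    rw [e1, wp_append, e2, wp_cons, hP, move_mid hmove, hd, ← wp_append, hPl]

lemma Qrec (comm : ∀ x y, lo ≤ x → x + 2 ≤ y → y ≤ hi → T x * T y = T y * T x) :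
    ∀ l c, lo + l + 1 ≤ c → c + l + 1 ≤ hi →
      wp T (Ql c (l+1)) = wp T (Ql (c-1) l) * wp T (Drun c (l+2)) := by
  intro l
  induction l with
  | zero =>
    intro c h1 h2
    show wp T ([c-1, c-1+2] ++ [c]) = wp T [c-1] * wp T [c+1, c+0]
    rw [show c-1+2 = c+1 from by omega, show c+0 = c from by omega]
    simp [mul_assoc]
  | succ l ih =>
    intro c h1 h2
    have e1 : Ql c (l+2) = Kl (c-(l+2)) (l+2) ++ Ql c (l+1) := rfl
    have e2 : Kl (c-(l+2)) (l+2) = Kl (c-1-(l+1)) (l+1) ++ [c+l+2] := by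
      rw [Kl_snoc (l+1) (c-(l+2))]
      rw [show c-(l+2) = c-1-(l+1) from by omega,
        show c-1-(l+1) + 2*(l+2) = c+l+2 from by omega]
    have hQ := ih c (by omega) (by omega)
    have hmove : T (c+l+2) * wp T (Ql (c-1) l) = wp T (Ql (c-1) l) * T (c+l+2) := by
      apply comm_wp
      intro d hd
      have hb := mem_Ql (l := l) (c := c-1) (by omega) hd
      exact (comm d (c+l+2) (by omega) (by omega) (by omega)).symm
    have hD : T (c+l+2) * wp T (Drun c (l+2)) = wp T (Drun c (l+3)) := by
      show _ = wp T ((c+(l+2)) :: Drun c (l+2))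
      rw [wp_cons, show c+(l+2) = c+l+2 from by omega]
    have hQl : Kl (c-1-(l+1)) (l+1) ++ Ql (c-1) l = Ql (c-1) (l+1) := rfl
    rw [e1, wp_append, e2, wp_append, hQ,
      show wp T [c+l+2] = T (c+l+2) from by simp,
      move_mid hmove, ← wp_append, hQl, hD]

lemma dex (comm : ∀ x y, lo ≤ x → x + 2 ≤ y → y ≤ hi → T x * T y = T y * T x)
    (braid : ∀ c, lo ≤ c → c + 2 ≤ hi + 1 →
      T c * T (c+1) * T c = T (c+1) * T c * T (c+1))
    (p s j : ℕ) (h1 : lo ≤ p) (h2 : p + s ≤ hi + 1) (h3 : p ≤ j) (h4 : j + 2 ≤ p + s) :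
    wp T (Drun p s) * T (j+1) = T j * wp T (Drun p s) := by
  obtain ⟨u, rfl⟩ : ∃ u, j = p + u := ⟨j - p, by omega⟩
  obtain ⟨v, rfl⟩ : ∃ v, s = v + 2 + u := ⟨p + s - (p + u + 2), by omega⟩
  have hsplit : Drun p (v+2+u) = Drun (p+u+2) v ++ ((p+u+1) :: (p+u) :: Drun p u) := by
    have h := Drun_append p (2+u) v
    rw [show p+(2+u) = p+u+2 from by omega, show v+(2+u) = v+2+u from by omega] at h
    rw [← h]
    congr 1
    rw [show 2+u = u+2 from by omega]
    rfl
  rw [hsplit]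
  simp only [wp_append, wp_cons]
  set X := wp T (Drun (p+u+2) v) with hXdef
  set Y := wp T (Drun p u) with hYdef
  have hYc : Y * T (p+u+1) = T (p+u+1) * Y := by
    refine (comm_wp ?_).symm
    intro d hd
    have hb := mem_Drun hd
    exact (comm d (p+u+1) (by omega) (by omega) (by omega)).symm
  have hXc : X * T (p+u) = T (p+u) * X := by
    refine (comm_wp ?_).symm
    intro d hd
    have hb := mem_Drun hd
    exact comm (p+u) d (by omega) (by omega) (by omega)
  have hbr := braid (p+u) (by omega) (by omega)
  have key : T (p+u+1) * (T (p+u) * (T (p+u+1) * Y)) =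
      T (p+u) * (T (p+u+1) * (T (p+u) * Y)) := by
    calc T (p+u+1) * (T (p+u) * (T (p+u+1) * Y))
        = (T (p+u+1) * T (p+u) * T (p+u+1)) * Y := by simp only [mul_assoc]
      _ = (T (p+u) * T (p+u+1) * T (p+u)) * Y := by rw [← hbr]
      _ = T (p+u) * (T (p+u+1) * (T (p+u) * Y)) := by simp only [mul_assoc]
  simp only [mul_assoc]
  rw [hYc, key, ← mul_assoc, hXc, mul_assoc]

lemma exW (comm : ∀ x y, lo ≤ x → x + 2 ≤ y → y ≤ hi → T x * T y = T y * T x)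
    (braid : ∀ c, lo ≤ c → c + 2 ≤ hi + 1 →
      T c * T (c+1) * T c = T (c+1) * T c * T (c+1))
    (a m : ℕ) (hlo : lo ≤ a) (hhi : a + 2*m ≤ hi + 2) :
    ∀ k, k ≤ m → ∀ j, a ≤ j → j + 2 ≤ a + m →
      wp T (WJp a m k) * T (j+k) = T j * wp T (WJp a m k) := by
  intro k
  induction k with
  | zero =>
    intro _ j _ _
    show wp T [] * T (j+0) = T j * wp T []
    simp
  | succ k ih =>
    intro hk j hj1 hj2
    show wp T (WJp a m k ++ Drun (a+k) m) * T (j+(k+1)) = T j * wp T (WJp a m k ++ Drun (a+k) m)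
    rw [wp_append, mul_assoc, show j+(k+1) = (j+k)+1 from by omega]
    rw [dex T lo hi comm braid (a+k) m (j+k) (by omega) (by omega) (by omega) (by omega)]
    rw [← mul_assoc, ih (by omega) j hj1 hj2, mul_assoc]

lemma inter (comm : ∀ x y, lo ≤ x → x + 2 ≤ y → y ≤ hi → T x * T y = T y * T x)
    (a m : ℕ) (hlo : lo ≤ a) (hhi : a + 2*m ≤ hi + 2) :
    ∀ k, k ≤ m → wp T (AJp a m k) * wp T (BJp a k) = wp T (WJp a m k) := by
  intro k
  induction k with
  | zero =>
    intro _
    show wp T [] * wp T [] = wp T []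
    simp
  | succ k ih =>
    intro hk
    show wp T (AJp a m k ++ Drun (a+2*k) (m-k)) * wp T (BJp a k ++ Drun (a+k) k)
      = wp T (WJp a m k ++ Drun (a+k) m)
    rw [wp_append, wp_append, wp_append]
    have hmove : wp T (Drun (a+2*k) (m-k)) * wp T (BJp a k)
        = wp T (BJp a k) * wp T (Drun (a+2*k) (m-k)) := by
      apply comm_wp
      intro c hc
      have hbc := mem_BJp hc
      refine (comm_wp ?_).symm
      intro d hd
      have hbd := mem_Drun hd
      exact comm c d (by omega) (by omega) (by omega)
    have hD : Drun (a+2*k) (m-k) ++ Drun (a+k) k = Drun (a+k) m := by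
      have h := Drun_append (a+k) k (m-k)
      rw [show a+k+k = a+2*k from by omega, show (m-k)+k = m from by omega] at h
      exact h
    rw [move_mid hmove, ih (by omega), ← wp_append, hD]

lemma PJl (comm : ∀ x y, lo ≤ x → x + 2 ≤ y → y ≤ hi → T x * T y = T y * T x)
    (a m : ℕ) (hlo : lo ≤ a) (hhi : a + 2*m ≤ hi + 2) :
    ∀ k, k + 1 ≤ m → wp T (Pl (a + 2*m - 2 - k) k) = wp T (AJl a m (k+1)) := by
  intro k
  induction k with
  | zero =>
    intro hk
    show wp T [a+2*m-2] = wp T (Drun (a + 2*(m-1)) 1 ++ [])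
    rw [List.append_nil]
    show _ = wp T [a + 2*(m-1) + 0]
    rw [show a+2*(m-1)+0 = a+2*m-2 from by omega]
  | succ k ih =>
    intro hk
    rw [show a + 2*m - 2 - (k+1) = a + 2*m - 3 - k from by omega]
    have hP := Prec T lo hi comm k (a + 2*m - 3 - k) (by omega) (by omega)
    rw [hP, show a + 2*m - 3 - k - (k+1) = a + 2*(m-(k+2)) from by omega,
      show a + 2*m - 3 - k + 1 = a + 2*m - 2 - k from by omega, ih (by omega)]
    show _ = wp T (Drun (a + 2*(m-(k+2))) (k+2) ++ AJl a m (k+1))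
    rw [wp_append]

lemma QJl (comm : ∀ x y, lo ≤ x → x + 2 ≤ y → y ≤ hi → T x * T y = T y * T x)
    (a m : ℕ) (hlo : lo ≤ a) (hhi : a + 2*m ≤ hi + 2) :
    ∀ k, k + 2 ≤ m → wp T (Ql (a+k+1) k) = wp T (BJp a (k+2)) := by
  intro k
  induction k with
  | zero =>
    intro hk
    show wp T [a+0+1] = wp T (([] ++ Drun (a+0) 0) ++ Drun (a+1) 1)
    show wp T [a+0+1] = wp T (([] ++ []) ++ [a+1+0])
    norm_num
  | succ k ih =>
    intro hk
    rw [show a+(k+1)+1 = a+k+2 from by omega]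
    have hQ := Qrec T lo hi comm k (a+k+2) (by omega) (by omega)
    rw [hQ, show a+k+2-1 = a+k+1 from by omega, ih (by omega)]
    show _ = wp T (BJp a (k+2) ++ Drun (a+(k+2)) (k+2))
    rw [wp_append, show a+(k+2) = a+k+2 from by omega]

lemma masterEq (comm : ∀ x y, lo ≤ x → x + 2 ≤ y → y ≤ hi → T x * T y = T y * T x)
    (a m : ℕ) (hm : 1 ≤ m) (hlo : lo ≤ a) (hhi : a + 2*m ≤ hi + 2) :
    wp T (Pl (a+m-1) (m-1)) * wp T (BJp a m) = wp T (WJp a m m) := by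
  have h1 : wp T (Pl (a+m-1) (m-1)) = wp T (AJp a m m) := by
    have h := PJl T lo hi comm a m hlo hhi (m-1) (by omega)
    rw [show a+2*m-2-(m-1) = a+m-1 from by omega, show (m-1)+1 = m from by omega] at h
    rw [h, AJconv a m m (le_refl m), show m - m = 0 from by omega]
    show _ = wp T ([] ++ AJl a m m)
    rw [List.nil_append]
  rw [h1, inter T lo hi comm a m hlo hhi m (le_refl m)]

end Alg

lemma Kl_reflect : ∀ (j p B : ℕ), p + 2*j ≤ 2*B →
    (Kl p j).map (fun c => 2*B - c) = (Kl (2*B - (p + 2*j)) j).reverse := by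
  intro j
  induction j with
  | zero =>
    intro p B h
    show [2*B - p] = [2*B - (p + 2*0)].reverse
    rw [show p + 2*0 = p from by omega]
    rfl
  | succ j ih =>
    intro p B h
    show (2*B - p) :: (Kl (p+2) j).map (fun c => 2*B - c) = _
    rw [ih (p+2) B (by omega),
      show 2*B - (p+2 + 2*j) = 2*B - (p + 2*(j+1)) from by omega,
      Kl_snoc j (2*B - (p + 2*(j+1))), List.reverse_append, List.reverse_singleton,
      List.singleton_append]
    congr 1
    omega

lemma wp_Pl_congr (T T' : ℕ → A) :
    ∀ l c, (∀ j, j ≤ l → wp T' (Kl (c-j) j) = wp T (Kl (c-j) j)) →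
      wp T' (Pl c l) = wp T (Pl c l) := by
  intro l
  induction l with
  | zero =>
    intro c h
    have := h 0 (le_refl 0)
    rw [Nat.sub_zero] at this
    exact this
  | succ l ih =>
    intro c h
    show wp T' (Pl c l ++ Kl (c-(l+1)) (l+1)) = wp T (Pl c l ++ Kl (c-(l+1)) (l+1))
    rw [wp_append, wp_append, ih c (fun j hj => h j (by omega)), h (l+1) (le_refl _)]

lemma wp_Ql_congr (T T' : ℕ → A) :
    ∀ l c, (∀ j, j ≤ l → wp T' (Kl (c-j) j) = wp T (Kl (c-j) j)) →
      wp T' (Ql c l) = wp T (Ql c l) := by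
  intro l
  induction l with
  | zero =>
    intro c h
    have := h 0 (le_refl 0)
    rw [Nat.sub_zero] at this
    exact this
  | succ l ih =>
    intro c h
    show wp T' (Kl (c-(l+1)) (l+1) ++ Ql c l) = wp T (Kl (c-(l+1)) (l+1) ++ Ql c l)
    rw [wp_append, wp_append, ih c (fun j hj => h j (by omega)), h (l+1) (le_refl _)]

lemma prod_range_Pl (T : ℕ → A) (b : ℕ) :
    ∀ l, ((List.range (l+1)).map (fun j => wp T (Kl (b-j) j))).prod = wp T (Pl b l) := by
  intro l
  induction l with
  | zero => simp [Pl, Kl, wp, List.range_succ]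
  | succ l ih =>
    rw [List.range_succ, List.map_append, List.prod_append, ih]
    show _ = wp T (Pl b l ++ Kl (b-(l+1)) (l+1))
    rw [wp_append]
    simp

lemma prod_range_Ql (T : ℕ → A) (b : ℕ) :
    ∀ l, (((List.range (l+1)).reverse).map (fun j => wp T (Kl (b-j) j))).prod = wp T (Ql b l) := by
  intro l
  induction l with
  | zero => simp [Ql, Kl, wp, List.range_succ]
  | succ l ih =>
    rw [List.range_succ, List.reverse_append, List.reverse_singleton, List.singleton_append,
      List.map_cons, List.prod_cons, ih]
    show _ = wp T (Kl (b-(l+1)) (l+1) ++ Ql b l)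
    rw [wp_append]

lemma wp_Kl_eq (T : ℕ → A) (p l : ℕ) :
    wp T (Kl p l) = ((List.range (l+1)).map (fun t => T (p + 2*t))).prod := by
  rw [Kl_eq_range]
  unfold wp
  rw [List.map_map]
  rfl

end St11


open St11




/- Statement 11: in the cyclotomic Hecke algebra `H(Γ_{n+mr})`, the element `T_{τ_i}`
satisfies `T_{τ_i}·T_j = T_{σ_i(j)}·T_{τ_i}` for all `j ∈ I`, hence normalizes the
parabolic subalgebra `H(Γ_{n,(m^r)})` generated by `{T_j : j ∈ I}`.  We state this
universally: in any `ℂ`-algebra containing elements satisfying the defining relations of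
`H_ζ(N,ℓ)`; this is equivalent to the claim in `H(Γ_{n+mr})` itself. -/

/-- `seqProd f start step len = f start * f (start + step) * ⋯` (`len` factors). -/
def seqProd {A : Type*} [Ring A] (f : ℕ → A) (start step len : ℕ) : A :=
  ((List.range len).map fun t => f (start + step * t)).prod

theorem statement_11
    (n m r ℓ : ℕ) (hn : 1 ≤ n) (hm : 1 ≤ m) (hr : 2 ≤ r) (hℓ : 1 ≤ ℓ)
    (i : ℕ) (hi1 : 1 ≤ i) (hi2 : i + 1 ≤ r)
    (N : ℕ) (hN : N = n + m * r)
    (ζ : ℂ) (hζ : ζ ≠ 0) (v : ℕ → ℂ) (hv : ∀ p, 1 ≤ p → p ≤ ℓ → v p ≠ 0)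
    (A : Type*) [Ring A] [Algebra ℂ A]
    (X T : ℕ → A)
    -- defining relations of the cyclotomic Hecke algebra `H(Γ_N) = H_ζ(N,ℓ)`
    (hXunit : ∀ j, 1 ≤ j → j ≤ N → IsUnit (X j))
    (hXX : ∀ j k, 1 ≤ j → j ≤ N → 1 ≤ k → k ≤ N → X j * X k = X k * X j)
    (hTX : ∀ c j, 1 ≤ c → c + 1 ≤ N → 1 ≤ j → j ≤ N → j ≠ c → j ≠ c + 1 →
      T c * X j = X j * T c)
    (hTXT : ∀ c, 1 ≤ c → c + 1 ≤ N → T c * X c * T c = ζ • X (c + 1))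
    (hquad : ∀ c, 1 ≤ c → c + 1 ≤ N → (T c + 1) * (T c - ζ • (1 : A)) = 0)
    (hTT : ∀ c d, 1 ≤ c → c + 1 ≤ N → 1 ≤ d → d + 1 ≤ N → c + 1 < d →
      T c * T d = T d * T c)
    (hbraid : ∀ c, 1 ≤ c → c + 2 ≤ N →
      T c * T (c + 1) * T c = T (c + 1) * T c * T (c + 1))
    (hcyclo : ((List.range ℓ).map fun p => X 1 - algebraMap ℂ A (v (p + 1))).prod = 0)
    -- `T_0` denotes (the image of) `X_1`
    (T0 : ℕ → A) (hT0 : ∀ j, T0 j = if j = 0 then X 1 else T j)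
    -- `σ_i`
    (σ : ℕ → ℕ)
    (hσ : ∀ j, σ j =
      if n + (i - 1) * m < j ∧ j < n + i * m then j + m
      else if n + i * m < j ∧ j < n + (i + 1) * m then j - m
      else j)
    -- `K_l` and `T_{τ_i} = K_0 K_1 ⋯ K_{m-2} K_{m-1} K_{m-2} ⋯ K_1 K_0`
    (K : ℕ → A) (hK : ∀ l, K l = seqProd T (n + i * m - l) 2 (l + 1))
    (Ttau : A)
    (hTtau : Ttau = ((List.range m).map K).prod *
      ((List.range (m - 1)).reverse.map K).prod)
    -- the parabolic subalgebra `H(Γ_{n,(m^r)})`, generated by `{T_j : j ∈ I}` where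
    -- `I = {0, 1, …, n+mr-1} ∖ {n, n+m, …, n+(r-1)m}`
    (S : Subalgebra ℂ A)
    (hS : S = Algebra.adjoin ℂ
      {a | ∃ j, j + 1 ≤ N ∧ (¬∃ t, t < r ∧ j = n + t * m) ∧ a = T0 j}) :
    -- `T_{τ_i}·T_j = T_{σ_i(j)}·T_{τ_i}` for every `j ∈ I`
    (∀ j, j + 1 ≤ N → (¬∃ t, t < r ∧ j = n + t * m) →
      Ttau * T0 j = T0 (σ j) * Ttau) ∧
    -- consequently `T_{τ_i}` normalizes `H(Γ_{n,(m^r)})`: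
    -- `T_{τ_i} · H(Γ_{n,(m^r)}) = H(Γ_{n,(m^r)}) · T_{τ_i}`
    ((fun h => Ttau * h) '' (S : Set A) = (fun h => h * Ttau) '' (S : Set A)) := by
  -- abbreviations
  obtain ⟨al, hal⟩ : ∃ x, x = n + (i-1)*m + 1 := ⟨_, rfl⟩
  obtain ⟨bl, hbl⟩ : ∃ x, x = n + i*m := ⟨_, rfl⟩
  have hab : al + m = bl + 1 := by
    have h : (i-1)*m + m = i*m := by
      have h1 : i - 1 + 1 = i := by omega
      calc (i-1)*m + m = ((i-1)+1)*m := by ring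
        _ = i*m := by rw [h1]
    omega
  have hbm : bl + m = n + (i+1)*m := by
    have h : i*m + m = (i+1)*m := by ring
    omega
  have hbN : bl + m ≤ N := by
    have h1 : (i+1)*m ≤ r*m := Nat.mul_le_mul_right m hi2
    have h2 : r*m = m*r := Nat.mul_comm r m
    omega
  have hal2 : 2 ≤ al := by
    have h0 : 0 ≤ (i-1)*m := Nat.zero_le _
    omega
  -- relations restricted to the window [al, al+2m-2]
  have comm_T : ∀ x y, al ≤ x → x + 2 ≤ y → y ≤ al + 2*m - 2 →
      T x * T y = T y * T x := by
    intro x y h1 h2 h3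
    exact hTT x y (by omega) (by omega) (by omega) (by omega) (by omega)
  have braid_T : ∀ c, al ≤ c → c + 2 ≤ (al + 2*m - 2) + 1 →
      T c * T (c+1) * T c = T (c+1) * T c * T (c+1) := by
    intro c h1 h2
    exact hbraid c (by omega) (by omega)
  -- `Ttau` as a word
  have hKw : ∀ l : ℕ, K l = wp T (Kl (bl - l) l) := by
    intro l
    rw [hK l, ← hbl, wp_Kl_eq]
    rfl
  have hP1 : ((List.range m).map K).prod = wp T (Pl bl (m-1)) := by
    rw [List.map_congr_left (fun l _ => hKw l)]
    have h := prod_range_Pl T bl (m-1)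
    rw [show (m-1)+1 = m from by omega] at h
    exact h
  have hP2 : ((List.range (m-1)).reverse.map K).prod = wp T (BJp al m) := by
    by_cases hm1 : m = 1
    · rw [hm1]
      simp [BJp, Drun, wp]
    · have h2 : 2 ≤ m := by omega
      rw [List.map_congr_left (fun l _ => hKw l)]
      have hq := prod_range_Ql T bl (m-2)
      rw [show (m-2)+1 = m-1 from by omega] at hq
      rw [hq]
      have q2 := QJl T al (al+2*m-2) comm_T al m le_rfl (by omega) (m-2) (by omega)
      rw [show al+(m-2)+1 = bl from by omega, show (m-2)+2 = m from by omega] at q2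
      exact q2
  have hTtauP : Ttau = wp T (Pl bl (m-1)) * wp T (BJp al m) := by
    rw [hTtau, hP1, hP2]
  have hbal : bl = al + m - 1 := by omega
  have hW : Ttau = wp T (WJp al m m) := by
    rw [hTtauP, hbal]
    exact masterEq T al (al+2*m-2) comm_T al m hm le_rfl (by omega)
  -- the reflected generators
  obtain ⟨T', hT'⟩ : ∃ T' : ℕ → A, T' = (fun c => T (2*bl - c)) := ⟨_, rfl⟩
  have hT'x : ∀ c, T' c = T (2*bl - c) := fun c => by rw [hT']
  have comm_T' : ∀ x y, al ≤ x → x + 2 ≤ y → y ≤ al + 2*m - 2 →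
      T' x * T' y = T' y * T' x := by
    intro x y h1 h2 h3
    rw [hT'x x, hT'x y]
    exact (comm_T (2*bl - y) (2*bl - x) (by omega) (by omega) (by omega)).symm
  have braid_T' : ∀ c, al ≤ c → c + 2 ≤ (al + 2*m - 2) + 1 →
      T' c * T' (c+1) * T' c = T' (c+1) * T' c * T' (c+1) := by
    intro c h1 h2
    rw [hT'x c, hT'x (c+1), show 2*bl - c = (2*bl - (c+1)) + 1 from by omega]
    exact (braid_T (2*bl - (c+1)) (by omega) (by omega)).symm
  have hrefl : ∀ j, j ≤ m - 1 → wp T' (Kl (bl - j) j) = wp T (Kl (bl - j) j) := by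
    intro j hj
    rw [hT', wp_comp, Kl_reflect j (bl - j) bl (by omega),
      show 2*bl - ((bl - j) + 2*j) = bl - j from by omega]
    apply wp_rev
    intro x hx y hy
    obtain ⟨s, hs, rfl⟩ := mem_Kl hx
    obtain ⟨t, ht, rfl⟩ := mem_Kl hy
    rcases Nat.lt_trichotomy s t with hlt | heq | hgt
    · exact comm_T _ _ (by omega) (by omega) (by omega)
    · rw [heq]
    · exact (comm_T _ _ (by omega) (by omega) (by omega)).symm
  have hPc : wp T' (Pl bl (m-1)) = wp T (Pl bl (m-1)) :=
    wp_Pl_congr T T' (m-1) bl (fun j hj => hrefl j hj)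
  have hBc : wp T' (BJp al m) = wp T (BJp al m) := by
    by_cases hm1 : m = 1
    · rw [hm1]
      simp [BJp, Drun, wp]
    · have h2 : 2 ≤ m := by omega
      have q1 := QJl T' al (al+2*m-2) comm_T' al m le_rfl (by omega) (m-2) (by omega)
      have q2 := QJl T al (al+2*m-2) comm_T al m le_rfl (by omega) (m-2) (by omega)
      rw [show al+(m-2)+1 = bl from by omega, show (m-2)+2 = m from by omega] at q1 q2
      rw [← q1, ← q2]
      exact wp_Ql_congr T T' (m-2) bl (fun j hj => hrefl j (by omega))
  have hW' : Ttau = wp T' (WJp al m m) := by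
    calc Ttau = wp T (Pl bl (m-1)) * wp T (BJp al m) := hTtauP
      _ = wp T' (Pl bl (m-1)) * wp T' (BJp al m) := by rw [hPc, hBc]
      _ = wp T' (WJp al m m) := by
          rw [hbal]
          exact masterEq T' al (al+2*m-2) comm_T' al m hm le_rfl (by omega)
  -- the two exchange relations
  have hexR : ∀ e, 1 ≤ e → e + 1 ≤ m → Ttau * T (bl + e) = T (bl + e - m) * Ttau := by
    intro e he1 he2
    have h := exW T al (al+2*m-2) comm_T braid_T al m le_rfl (by omega) m le_rfl
      (al+e-1) (by omega) (by omega)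
    rw [show al+e-1+m = bl + e from by omega] at h
    rw [hW]
    rw [show bl + e - m = al+e-1 from by omega]
    exact h
  have hexL : ∀ e, 1 ≤ e → e + 1 ≤ m → Ttau * T (bl - e) = T (bl + m - e) * Ttau := by
    intro e he1 he2
    have h := exW T' al (al+2*m-2) comm_T' braid_T' al m le_rfl (by omega) m le_rfl
      (al+e-1) (by omega) (by omega)
    rw [hT'x (al+e-1+m), hT'x (al+e-1),
      show 2*bl - (al+e-1+m) = bl - e from by omega,
      show 2*bl - (al+e-1) = bl + m - e from by omega] at h
    rw [hW']
    exact h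
  -- commuting with far-away letters
  have hcommfar : ∀ (z : A), (∀ c, al ≤ c → c ≤ al + 2*m - 2 → z * T c = T c * z) →
      z * Ttau = Ttau * z := by
    intro z hz
    rw [hW]
    refine comm_wp ?_
    intro c hc
    have hb := mem_WJp hc
    exact hz c hb.1 (by omega)
  -- σ in window form
  have hσe : ∀ j, σ j = if al ≤ j ∧ j < bl then j + m
      else if bl < j ∧ j < bl + m then j - m else j := by
    intro j
    rw [hσ j]
    by_cases c1 : al ≤ j ∧ j < bl
    · rw [if_pos (show n+(i-1)*m < j ∧ j < n+i*m from by omega), if_pos c1]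
    · rw [if_neg (show ¬(n+(i-1)*m < j ∧ j < n+i*m) from by omega), if_neg c1]
      by_cases c2 : bl < j ∧ j < bl + m
      · rw [if_pos (show n+i*m < j ∧ j < n+(i+1)*m from by omega), if_pos c2]
      · rw [if_neg (show ¬(n+i*m < j ∧ j < n+(i+1)*m) from by omega), if_neg c2]
  -- σ stays in the index set and is involutive there
  have hI : ∀ j, j + 1 ≤ N → (¬∃ t, t < r ∧ j = n + t*m) →
      (σ j + 1 ≤ N ∧ (¬∃ t, t < r ∧ σ j = n + t*m) ∧ σ (σ j) = j) := by
    intro j hj1 hj2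
    by_cases c1 : al ≤ j ∧ j < bl
    · have h1 : σ j = j + m := by rw [hσe j, if_pos c1]
      refine ⟨by omega, ?_, ?_⟩
      · rintro ⟨t, ht, hteq⟩
        rw [h1] at hteq
        have h2 : i*m < t*m := by omega
        have h3 : t*m < (i+1)*m := by omega
        rcases le_or_gt t i with h4 | h4
        · have := Nat.mul_le_mul_right m h4; omega
        · have := Nat.mul_le_mul_right m (show i+1 ≤ t from h4); omega
      · rw [h1, hσe (j+m), if_neg (by omega), if_pos (by omega)]
        omega
    · by_cases c2 : bl < j ∧ j < bl + m
      · have h1 : σ j = j - m := by rw [hσe j, if_neg c1, if_pos c2]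
        refine ⟨by omega, ?_, ?_⟩
        · rintro ⟨t, ht, hteq⟩
          rw [h1] at hteq
          have h2 : (i-1)*m < t*m := by omega
          have h3 : t*m < i*m := by omega
          rcases le_or_gt t (i-1) with h4 | h4
          · have := Nat.mul_le_mul_right m h4; omega
          · have := Nat.mul_le_mul_right m (show i ≤ t from by omega); omega
        · rw [h1, hσe (j-m), if_pos (by omega)]
          omega
      · have h1 : σ j = j := by rw [hσe j, if_neg c1, if_neg c2]
        exact ⟨by rw [h1]; exact hj1, by rw [h1]; exact hj2, by rw [h1, h1]⟩
  -- the main exchange relation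
  have hrel : ∀ j, j + 1 ≤ N → (¬∃ t, t < r ∧ j = n + t*m) →
      Ttau * T0 j = T0 (σ j) * Ttau := by
    intro j hj1 hj2
    have hne1 : j ≠ n + (i-1)*m := fun h => hj2 ⟨i-1, by omega, h⟩
    have hne2 : j ≠ n + i*m := fun h => hj2 ⟨i, by omega, h⟩
    have hne3 : j ≠ bl + m := by
      intro h
      rcases Nat.lt_or_ge (i+1) r with hlt | hge
      · exact hj2 ⟨i+1, hlt, by omega⟩
      · have he : (i+1) * m = r * m := by
          have h5 : i+1 = r := by omega
          rw [h5]
        have hrm : r*m = m*r := Nat.mul_comm r m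
        omega
    by_cases hc0 : j = 0
    · subst hc0
      have h0 : σ 0 = 0 := by
        rw [hσe 0, if_neg (by omega), if_neg (by omega)]
      rw [h0, hT0 0, if_pos rfl]
      refine (hcommfar (X 1) ?_).symm
      intro c hc1 hc2
      exact (hTX c 1 (by omega) (by omega) (by omega) (by omega) (by omega) (by omega)).symm
    · by_cases hclow : j + 2 ≤ al
      · have h0 : σ j = j := by
          rw [hσe j, if_neg (by omega), if_neg (by omega)]
        rw [h0, hT0 j, if_neg hc0]
        refine (hcommfar (T j) ?_).symm
        intro c hc1 hc2
        exact hTT j c (by omega) (by omega) (by omega) (by omega) (by omega)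
      · by_cases hchigh : bl + m + 1 ≤ j
        · have h0 : σ j = j := by
            rw [hσe j, if_neg (by omega), if_neg (by omega)]
          rw [h0, hT0 j, if_neg hc0]
          refine (hcommfar (T j) ?_).symm
          intro c hc1 hc2
          exact (hTT c j (by omega) (by omega) (by omega) (by omega) (by omega)).symm
        · by_cases hcmid : j < bl
          · have hjal : al ≤ j := by omega
            have h := hexL (bl - j) (by omega) (by omega)
            rw [show bl - (bl - j) = j from by omega,
              show bl + m - (bl - j) = j + m from by omega] at h
            have h1 : σ j = j + m := by rw [hσe j, if_pos ⟨hjal, hcmid⟩]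
            rw [h1, hT0 j, if_neg hc0, hT0 (j+m), if_neg (by omega)]
            exact h
          · have hjbl : bl + 1 ≤ j := by omega
            have h := hexR (j - bl) (by omega) (by omega)
            rw [show bl + (j - bl) = j from by omega] at h
            have h1 : σ j = j - m := by
              rw [hσe j, if_neg (by omega), if_pos ⟨by omega, by omega⟩]
            rw [h1, hT0 j, if_neg hc0, hT0 (j-m), if_neg (by omega)]
            exact h
  refine ⟨hrel, ?_⟩
  subst hS
  have flip1 : ∀ x, x ∈ Algebra.adjoin ℂ
      {a | ∃ j, j + 1 ≤ N ∧ (¬∃ t, t < r ∧ j = n + t * m) ∧ a = T0 j} →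
      ∃ y ∈ Algebra.adjoin ℂ
        {a | ∃ j, j + 1 ≤ N ∧ (¬∃ t, t < r ∧ j = n + t * m) ∧ a = T0 j},
        Ttau * x = y * Ttau := by
    intro x hx
    induction hx using Algebra.adjoin_induction with
    | mem z hz =>
      obtain ⟨j, hj1, hj2, rfl⟩ := hz
      exact ⟨T0 (σ j),
        Algebra.subset_adjoin ⟨σ j, (hI j hj1 hj2).1, (hI j hj1 hj2).2.1, rfl⟩,
        hrel j hj1 hj2⟩
    | algebraMap r =>
      exact ⟨algebraMap ℂ A r, Subalgebra.algebraMap_mem _ r,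
        (Algebra.commutes r Ttau).symm⟩
    | add x y hx hy ihx ihy =>
      obtain ⟨x', hx', ex⟩ := ihx
      obtain ⟨y', hy', ey⟩ := ihy
      exact ⟨x' + y', add_mem hx' hy', by rw [mul_add, ex, ey, add_mul]⟩
    | mul x y hx hy ihx ihy =>
      obtain ⟨x', hx', ex⟩ := ihx
      obtain ⟨y', hy', ey⟩ := ihy
      exact ⟨x' * y', mul_mem hx' hy',
        by rw [← mul_assoc, ex, mul_assoc, ey, ← mul_assoc]⟩
  have flip2 : ∀ x, x ∈ Algebra.adjoin ℂ
      {a | ∃ j, j + 1 ≤ N ∧ (¬∃ t, t < r ∧ j = n + t * m) ∧ a = T0 j} →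
      ∃ y ∈ Algebra.adjoin ℂ
        {a | ∃ j, j + 1 ≤ N ∧ (¬∃ t, t < r ∧ j = n + t * m) ∧ a = T0 j},
        x * Ttau = Ttau * y := by
    intro x hx
    induction hx using Algebra.adjoin_induction with
    | mem z hz =>
      obtain ⟨j, hj1, hj2, rfl⟩ := hz
      have h := hrel (σ j) (hI j hj1 hj2).1 (hI j hj1 hj2).2.1
      rw [(hI j hj1 hj2).2.2] at h
      exact ⟨T0 (σ j),
        Algebra.subset_adjoin ⟨σ j, (hI j hj1 hj2).1, (hI j hj1 hj2).2.1, rfl⟩,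
        h.symm⟩
    | algebraMap r =>
      exact ⟨algebraMap ℂ A r, Subalgebra.algebraMap_mem _ r,
        Algebra.commutes r Ttau⟩
    | add x y hx hy ihx ihy =>
      obtain ⟨x', hx', ex⟩ := ihx
      obtain ⟨y', hy', ey⟩ := ihy
      exact ⟨x' + y', add_mem hx' hy', by rw [add_mul, ex, ey, mul_add]⟩
    | mul x y hx hy ihx ihy =>
      obtain ⟨x', hx', ex⟩ := ihx
      obtain ⟨y', hy', ey⟩ := ihy
      exact ⟨x' * y', mul_mem hx' hy',
        by rw [mul_assoc, ey, ← mul_assoc, ex, mul_assoc]⟩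
  ext z
  constructor
  · rintro ⟨x, hx, rfl⟩
    obtain ⟨y, hy, h⟩ := flip1 x hx
    exact ⟨y, hy, h.symm⟩
  · rintro ⟨x, hx, rfl⟩
    obtain ⟨y, hy, h⟩ := flip2 x hx
    exact ⟨y, hy, h.symm⟩
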